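/- Let G : ℕ → ℂ satisfy G(i+2) = G(i+1) + G(i) for all i ≥ 0. Then the series ∑_{j=0}^{∞} G(j)² / 2^{4j} converges and ∑_{j=0}^{∞} G(j)² / 16^j = (3552/3553)·G(0)² + (224/3553)·G(1)² + (16/3553)·G(2)². -/

import Mathlib

theorem square_sum_sixteenth (G : ℕ → ℂ) (hG : ∀ i, G (i + 2) = G (i + 1) + G i) :
    HasSum (fun j : ℕ => G j ^ 2 / 2 ^ (4 * j))
      ((3552 / 3553) * G 0 ^ 2 + (224 / 3553) * G 1 ^ 2 + (16 / 3553) * G 2 ^ 2) := by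
  have hr2 : Real.sqrt 5 ^ 2 = 5 := Real.sq_sqrt (by norm_num)
  have hr0 : (0:ℝ) ≤ Real.sqrt 5 := Real.sqrt_nonneg 5
  set r : ℝ := Real.sqrt 5 with hrdef
  set ρ : ℂ := (r : ℂ) with hρdef
  have hρ : ρ ^ 2 = 5 := by rw [hρdef]; norm_cast
  have hρ0 : ρ ≠ 0 := by
    rw [hρdef]
    simp only [ne_eq, Complex.ofReal_eq_zero]
    intro h
    rw [h] at hr2; norm_num at hr2
  set α : ℂ := (1 + ρ) / 2 with hαdef
  set β : ℂ := (1 - ρ) / 2 with hβdef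
  set A : ℂ := (G 1 - G 0 * β) / ρ with hAdef
  set B : ℂ := (G 0 * α - G 1) / ρ with hBdef
  have hα2 : α ^ 2 = α + 1 := by rw [hαdef]; linear_combination hρ / 4
  have hβ2 : β ^ 2 = β + 1 := by rw [hβdef]; linear_combination hρ / 4
  have hGn : ∀ n, G n = A * α ^ n + B * β ^ n := by
    intro n
    induction n using Nat.twoStepInduction with
    | zero => rw [hAdef, hBdef]; field_simp; ring
    | one => rw [hAdef, hBdef]; field_simp; ring
    | more n ih1 ih2 =>
      rw [hG, ih1, ih2]
      linear_combination (-(A * α ^ n)) * hα2 + (-(B * β ^ n)) * hβ2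
  -- norms
  have hx1 : α ^ 2 / 16 = (((1 + r) ^ 2 / 64 : ℝ) : ℂ) := by rw [hαdef, hρdef]; push_cast; ring
  have hx2 : β ^ 2 / 16 = (((1 - r) ^ 2 / 64 : ℝ) : ℂ) := by rw [hβdef, hρdef]; push_cast; ring
  have hx3 : α * β / 16 = (-1 : ℂ) / 16 := by
    rw [hαdef, hβdef]; linear_combination -hρ/64
  have hn1 : ‖α ^ 2 / 16‖ < 1 := by
    rw [hx1, Complex.norm_real, Real.norm_eq_abs, abs_div, abs_of_nonneg (by positivity : (0:ℝ) ≤ (1+r)^2)]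
    rw [abs_of_nonneg (by norm_num : (0:ℝ) ≤ 64)]
    nlinarith [hr2, hr0]
  have hn2 : ‖β ^ 2 / 16‖ < 1 := by
    rw [hx2, Complex.norm_real, Real.norm_eq_abs, abs_div, abs_of_nonneg (by positivity : (0:ℝ) ≤ (1-r)^2)]
    rw [abs_of_nonneg (by norm_num : (0:ℝ) ≤ 64)]
    nlinarith [hr2, hr0]
  have hn3 : ‖α * β / 16‖ < 1 := by
    rw [hx3]; norm_num
  have h1 : HasSum (fun j : ℕ => A ^ 2 * (α ^ 2 / 16) ^ j) (A ^ 2 * (1 - α ^ 2 / 16)⁻¹) :=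
    (hasSum_geometric_of_norm_lt_one hn1).mul_left _
  have h2 : HasSum (fun j : ℕ => B ^ 2 * (β ^ 2 / 16) ^ j) (B ^ 2 * (1 - β ^ 2 / 16)⁻¹) :=
    (hasSum_geometric_of_norm_lt_one hn2).mul_left _
  have h3 : HasSum (fun j : ℕ => (2 * A * B) * (α * β / 16) ^ j) ((2 * A * B) * (1 - α * β / 16)⁻¹) :=
    (hasSum_geometric_of_norm_lt_one hn3).mul_left _
  have htot := (h1.add h2).add h3
  have hkey : (fun j : ℕ => G j ^ 2 / 2 ^ (4 * j)) =
      fun j : ℕ => A ^ 2 * (α ^ 2 / 16) ^ j + B ^ 2 * (β ^ 2 / 16) ^ j + (2 * A * B) * (α * β / 16) ^ j := by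
    funext j
    rw [hGn j]
    have h16 : (2 : ℂ) ^ (4 * j) = 16 ^ j := by rw [pow_mul]; norm_num
    rw [h16]
    have e1 : (α ^ 2 / 16 : ℂ) ^ j = (α ^ j) ^ 2 / 16 ^ j := by
      rw [div_pow, ← pow_mul, mul_comm 2 j, pow_mul]
    have e2 : (β ^ 2 / 16 : ℂ) ^ j = (β ^ j) ^ 2 / 16 ^ j := by
      rw [div_pow, ← pow_mul, mul_comm 2 j, pow_mul]
    have e3 : (α * β / 16 : ℂ) ^ j = α ^ j * β ^ j / 16 ^ j := by
      rw [div_pow, mul_pow]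
    rw [e1, e2, e3]
    have h160 : (16 : ℂ) ^ j ≠ 0 := pow_ne_zero _ (by norm_num)
    field_simp
    ring
  rw [hkey]
  convert htot using 1
  have hd1 : (1 : ℂ) - α ^ 2 / 16 ≠ 0 := by
    intro h
    have : α ^ 2 / 16 = 1 := by linear_combination -h
    rw [this] at hn1; simp at hn1
  have hd2 : (1 : ℂ) - β ^ 2 / 16 ≠ 0 := by
    intro h
    have : β ^ 2 / 16 = 1 := by linear_combination -h
    rw [this] at hn2; simp at hn2
  have hd3 : (1 : ℂ) - α * β / 16 ≠ 0 := by
    rw [hx3]; norm_num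
  have h29a : (29 : ℂ) - ρ ≠ 0 := by
    intro h
    have : ρ = 29 := by linear_combination -h
    rw [this] at hρ; norm_num at hρ
  have h29b : (29 : ℂ) + ρ ≠ 0 := by
    intro h
    have : ρ = -29 := by linear_combination h
    rw [this] at hρ; norm_num at hρ
  have hv1 : (1 - ((1 + ρ) / 2) ^ 2 / 16)⁻¹ = 32 / (29 - ρ) := by
    have e : (1 - ((1 + ρ) / 2) ^ 2 / 16) = (29 - ρ) / 32 := by linear_combination -hρ/64
    rw [e, inv_div]
  have hv2 : (1 - ((1 - ρ) / 2) ^ 2 / 16)⁻¹ = 32 / (29 + ρ) := by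
    have e : (1 - ((1 - ρ) / 2) ^ 2 / 16) = (29 + ρ) / 32 := by linear_combination -hρ/64
    rw [e, inv_div]
  have hv3 : (1 - (1 + ρ) / 2 * ((1 - ρ) / 2) / 16)⁻¹ = 16 / 17 := by
    have e : (1 - (1 + ρ) / 2 * ((1 - ρ) / 2) / 16) = 17 / 16 := by linear_combination hρ/64
    rw [e, inv_div]
  have hw1 : (32 : ℂ) / (29 - ρ) = (232 + 8 * ρ) / 209 := by
    rw [div_eq_div_iff h29a (by norm_num : (209:ℂ) ≠ 0)]
    linear_combination 8 * hρ
  have hw2 : (32 : ℂ) / (29 + ρ) = (232 - 8 * ρ) / 209 := by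
    rw [div_eq_div_iff h29b (by norm_num : (209:ℂ) ≠ 0)]
    linear_combination 8 * hρ
  have hA2 : A ^ 2 = (G 1 - G 0 * ((1 - ρ) / 2)) ^ 2 / 5 := by
    rw [hAdef, div_pow, hρ]
  have hB2 : B ^ 2 = (G 0 * ((1 + ρ) / 2) - G 1) ^ 2 / 5 := by
    rw [hBdef, div_pow, hρ]
  have hAB : A * B = (G 1 - G 0 * ((1 - ρ) / 2)) * (G 0 * ((1 + ρ) / 2) - G 1) / 5 := by
    rw [hAdef, hBdef, div_mul_div_comm, ← hρ]; ring
  rw [hG 0, hv1, hv2, hv3, hw1, hw2, hA2, hB2, mul_assoc 2, hAB]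
  field_simp
  linear_combination (-3865664 * (G 0 * G 1) - 49855696 * G 0 ^ 2) * hρ
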